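/- Let u^1,…,u^n denote the coordinate functions on Ω, let f^1,…,f^n be smooth with L_j f^s = λ^j L_j u^s for all j, s, let h be a nonvanishing smooth function and g a smooth function with L_i g = λ^i L_i h for all i. For c ∈ ℝ set φ_c = (g + c)/h and r_c = (φ_c, u^1 φ_c − f^1, …, u^n φ_c − f^n) : Ω → ℝ^{n+1}. Then the tangent directions are independent of c: for all c₁, c₂ ∈ ℝ, every j, and every p ∈ Ω, (φ_{c₂}(p) − λ^j(p))·L_j r_{c₁}(p) = (φ_{c₁}(p) − λ^j(p))·L_j r_{c₂}(p); in fact L_j r_c = (φ_c − λ^j)·(L_j U − (L_j h/h)·U), where U = (1, u^1, …, u^n) and the vector field L_j U − (L_j h/h)·U does not depend on c. -/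

import Mathlib

/-- Directional derivative of `w` along the vector field `ξ j`. -/
noncomputable def Lder {n : ℕ} {F : Type*} [NormedAddCommGroup F] [NormedSpace ℝ F]
    (ξ : Fin n → (Fin n → ℝ) → (Fin n → ℝ)) (j : Fin n)
    (w : (Fin n → ℝ) → F) : (Fin n → ℝ) → F :=
  fun p => fderiv ℝ w p (ξ j p)

/-- the family of conjugate hypersurfaces `r_c` obtained by shifting the
flux `g ↦ g + c` is a parallel family: the tangent directions `L_j r_c` are independent
of `c`; in fact `L_j r_c = (φ_c − λ^j)·(L_j U − (L_j h/h)·U)` with `U = (1, u¹, …, uⁿ)`. -/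
theorem stmt3 {n : ℕ} (Ω : Set (Fin n → ℝ)) (hΩ : IsOpen Ω)
    (ξ : Fin n → (Fin n → ℝ) → (Fin n → ℝ))
    (hξ : ∀ i, ContDiffOn ℝ (⊤ : ℕ∞) (ξ i) Ω)
    (hind : ∀ p ∈ Ω, LinearIndependent ℝ (fun i => ξ i p))
    (lam : Fin n → (Fin n → ℝ) → ℝ)
    (hlam : ∀ i, ContDiffOn ℝ (⊤ : ℕ∞) (lam i) Ω)
    (hdist : ∀ i j, i ≠ j → ∀ p ∈ Ω, lam i p ≠ lam j p)
    (f : Fin n → (Fin n → ℝ) → ℝ)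
    (hf : ∀ s, ContDiffOn ℝ (⊤ : ℕ∞) (f s) Ω)
    (hcons : ∀ j s, ∀ p ∈ Ω,
      Lder ξ j (f s) p = lam j p * Lder ξ j (fun q => q s) p)
    (h g : (Fin n → ℝ) → ℝ)
    (hh : ContDiffOn ℝ (⊤ : ℕ∞) h Ω) (hg : ContDiffOn ℝ (⊤ : ℕ∞) g Ω)
    (hh0 : ∀ p ∈ Ω, h p ≠ 0)
    (hcl : ∀ i, ∀ p ∈ Ω, Lder ξ i g p = lam i p * Lder ξ i h p)
    (r : ℝ → (Fin n → ℝ) → (Fin (n + 1) → ℝ))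
    (hr : ∀ c : ℝ, r c = fun p =>
      Matrix.vecCons ((g p + c) / h p) (fun s => p s * ((g p + c) / h p) - f s p))
    (U : (Fin n → ℝ) → (Fin (n + 1) → ℝ))
    (hU : U = fun p => Matrix.vecCons 1 (fun s => p s)) :
    (∀ c₁ c₂ : ℝ, ∀ j, ∀ p ∈ Ω,
        ((g p + c₂) / h p - lam j p) • Lder ξ j (r c₁) p
          = ((g p + c₁) / h p - lam j p) • Lder ξ j (r c₂) p)
      ∧
    (∀ c : ℝ, ∀ j, ∀ p ∈ Ω,
        Lder ξ j (r c) p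
          = ((g p + c) / h p - lam j p) •
              (Lder ξ j U p - (Lder ξ j h p / h p) • U p)) := by
  have key : ∀ c : ℝ, ∀ j, ∀ p ∈ Ω,
      Lder ξ j (r c) p
        = ((g p + c) / h p - lam j p) •
            (Lder ξ j U p - (Lder ξ j h p / h p) • U p) := by
    intro c j p hp
    have hmem : Ω ∈ nhds p := hΩ.mem_nhds hp
    have dg : DifferentiableAt ℝ g p := (hg.contDiffAt hmem).differentiableAt (by simp)
    have dh : DifferentiableAt ℝ h p := (hh.contDiffAt hmem).differentiableAt (by simp)
    have df : ∀ s, DifferentiableAt ℝ (f s) p :=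
      fun s => ((hf s).contDiffAt hmem).differentiableAt (by simp)
    have dco : ∀ s : Fin n, DifferentiableAt ℝ (fun q : Fin n → ℝ => q s) p :=
      fun s => (hasFDerivAt_apply s p).differentiableAt
    have hne : h p ≠ 0 := hh0 p hp
    set v : Fin n → ℝ := ξ j p with hv
    -- the line through p in direction v
    have h00 : p + (0 : ℝ) • v = p := by simp
    have hγ : HasDerivAt (fun t : ℝ => p + t • v) v 0 := by
      simpa using ((hasDerivAt_id (0 : ℝ)).smul_const v).const_add p
    have Hcomp : ∀ (w : (Fin n → ℝ) → ℝ), DifferentiableAt ℝ w p →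
        HasDerivAt (fun t : ℝ => w (p + t • v)) (fderiv ℝ w p v) 0 := by
      intro w hw
      have hw' : HasFDerivAt w (fderiv ℝ w p) (p + (0 : ℝ) • v) := by
        rw [h00]; exact hw.hasFDerivAt
      exact hw'.comp_hasDerivAt 0 hγ
    have Eg := Hcomp g dg
    have Eh := Hcomp h dh
    -- directional derivative abbreviations
    set Dg : ℝ := fderiv ℝ g p v with hDgdef
    set Dh : ℝ := fderiv ℝ h p v with hDhdef
    have hDg : Dg = lam j p * Dh := hcl j p hp
    have hco : ∀ s, fderiv ℝ (fun q : Fin n → ℝ => q s) p v = v s := by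
      intro s
      rw [(hasFDerivAt_apply s p).fderiv]
      rfl
    have hDf : ∀ s, fderiv ℝ (f s) p v = lam j p * v s := by
      intro s
      have := hcons j s p hp
      simp only [Lder, ← hv] at this
      rw [this, hco]
    -- differentiability of the quotient
    have d0 : DifferentiableAt ℝ (fun x => (g x + c) / h x) p := by
      simpa [div_eq_mul_inv, Pi.mul_def, Pi.inv_def] using (dg.add_const c).mul (dh.inv hne)
    have dS : ∀ s, DifferentiableAt ℝ
        (fun x : Fin n → ℝ => x s * ((g x + c) / h x) - f s x) p :=
      fun s => ((dco s).mul d0).sub (df s)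
    -- derivative of the quotient along the line
    have Hφ : HasDerivAt (fun t : ℝ => (g (p + t • v) + c) / h (p + t • v))
        ((Dg * h p - (g p + c) * Dh) / h p ^ 2) 0 := by
      have := (Eg.add_const c).div Eh (by rw [h00]; exact hne)
      simpa [h00, Pi.div_def] using this
    have hDφ : fderiv ℝ (fun x => (g x + c) / h x) p v
        = (Dg * h p - (g p + c) * Dh) / h p ^ 2 :=
      (Hcomp _ d0).unique Hφ
    have hDS : ∀ s, fderiv ℝ (fun x : Fin n → ℝ => x s * ((g x + c) / h x) - f s x) p v
        = (v s * ((g p + c) / h p) + p s * ((Dg * h p - (g p + c) * Dh) / h p ^ 2))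
            - lam j p * v s := by
      intro s
      refine (Hcomp _ (dS s)).unique ?_
      have := ((Hcomp _ (dco s)).mul Hφ).sub (Hcomp _ (df s))
      rw [hco s, hDf s] at this
      simpa [h00, Pi.mul_def, Pi.sub_def] using this
    -- differentiability of r c and U
    have dr : DifferentiableAt ℝ (r c) p := by
      rw [hr]
      refine differentiableAt_pi.2 fun i => ?_
      refine Fin.cases ?_ (fun s => ?_) i
      · simpa using d0
      · simpa using dS s
    have dU : DifferentiableAt ℝ U p := by
      rw [hU]
      refine differentiableAt_pi.2 fun i => ?_
      refine Fin.cases ?_ (fun s => ?_) i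
      · simpa using differentiableAt_const (1 : ℝ)
      · simpa using dco s
    -- component extraction
    have happ : ∀ i, Lder ξ j (r c) p i = fderiv ℝ (fun x => r c x i) p v := by
      intro i
      rw [Lder, ← hv, ((hasFDerivAt_pi'.1 dr.hasFDerivAt) i).fderiv]
      rfl
    have happU : ∀ i, Lder ξ j U p i = fderiv ℝ (fun x => U x i) p v := by
      intro i
      rw [Lder, ← hv, ((hasFDerivAt_pi'.1 dU.hasFDerivAt) i).fderiv]
      rfl
    have hLU0 : Lder ξ j U p 0 = 0 := by
      rw [happU 0]
      have : (fun x => U x 0) = fun _ : Fin n → ℝ => (1 : ℝ) := by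
        funext x; simp [hU]
      rw [this, fderiv_fun_const]
      rfl
    have hLUs : ∀ s, Lder ξ j U p s.succ = v s := by
      intro s
      rw [happU s.succ]
      have : (fun x => U x s.succ) = fun x : Fin n → ℝ => x s := by
        funext x; rw [hU]; simp
      rw [this, hco]
    have hU0 : U p 0 = 1 := by simp [hU]
    have hUs : ∀ s, U p s.succ = p s := by intro s; rw [hU]; simp
    have hLh : Lder ξ j h p = Dh := rfl
    -- prove componentwise
    funext i
    simp only [Pi.smul_apply, Pi.sub_apply, smul_eq_mul, hLh]
    refine Fin.cases ?_ (fun s => ?_) i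
    · rw [happ 0]
      have hc0 : (fun x => r c x 0) = fun x => (g x + c) / h x := by
        funext x; simp [hr]
      rw [hc0, hDφ, hLU0, hU0, hDg]
      field_simp
      ring
    · rw [happ s.succ]
      have hcs : (fun x => r c x s.succ)
          = fun x : Fin n → ℝ => x s * ((g x + c) / h x) - f s x := by
        funext x; rw [hr]; simp
      rw [hcs, hDS s, hLUs s, hUs s, hDg]
      field_simp
      ring
  refine ⟨fun c₁ c₂ j p hp => ?_, key⟩
  rw [key c₁ j p hp, key c₂ j p hp, smul_smul, smul_smul, mul_comm]
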